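/- arXiv:1105.4408 — 4 statements merged into one kernel-verified Lean document; each statement's English description precedes it below -/
import Mathlib

section
/- Let Φ have unit-norm columns with coherence μ < 1/(2K−1), and let x be a nonzero K-sparse vector with support T and y = Φx. Then the index maximizing |⟨φ_i, y⟩| belongs to T; i.e., the first step of orthogonal matching pursuit selects a correct index. -/
/-- If `Φ` has unit-norm columns with coherence `μ < 1/(2K−1)` and `x` is a nonzero
`K`-sparse vector with `y = Φx`, then any index maximizing `|⟨φ_i, y⟩|` belongs to the
support of `x`: the first OMP step selects a correct index. -/
theorem omp_first_step_correct (m n K : ℕ) (hK : 1 ≤ K)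
    (Φ : Matrix (Fin m) (Fin n) ℝ) (μ : ℝ)
    (hunit : ∀ j, ∑ i, (Φ i j) ^ 2 = 1)
    (hμ : ∀ a b, a ≠ b → |∑ i, Φ i a * Φ i b| ≤ μ)
    (hμK : μ < 1 / (2 * K - 1))
    (x : Fin n → ℝ) (hx0 : x ≠ 0)
    (hx : (Finset.univ.filter (fun j => x j ≠ 0)).card ≤ K)
    (y : Fin m → ℝ) (hy : y = Φ.mulVec x)
    (t : Fin n) (ht : ∀ i, |∑ k, Φ k i * y k| ≤ |∑ k, Φ k t * y k|) :
    x t ≠ 0 := by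
  by_contra hxt
  set T := Finset.univ.filter (fun j => x j ≠ 0) with hT
  have hTne : T.Nonempty := by
    obtain ⟨j, hj⟩ := Function.ne_iff.mp hx0
    exact ⟨j, by simpa [hT] using hj⟩
  obtain ⟨j, hjT, hjmax⟩ := T.exists_max_image (fun j => |x j|) hTne
  have hjx : x j ≠ 0 := (Finset.mem_filter.mp hjT).2
  have htT : t ∉ T := by simp [hT, hxt]
  have hjt : j ≠ t := fun h => htT (h ▸ hjT)
  have hμ0 : 0 ≤ μ := le_trans (abs_nonneg _) (hμ j t hjt)
  have hMpos : 0 < |x j| := abs_pos.mpr hjx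
  -- correlation formula
  have hc : ∀ i, ∑ k, Φ k i * y k = ∑ jj ∈ T, (∑ k, Φ k i * Φ k jj) * x jj := by
    intro i
    rw [hy]
    have h1 : ∑ k, Φ k i * (Φ.mulVec x) k
        = ∑ jj, (∑ k, Φ k i * Φ k jj) * x jj := by
      simp only [Matrix.mulVec, dotProduct, Finset.mul_sum, Finset.sum_mul]
      rw [Finset.sum_comm]
      apply Finset.sum_congr rfl
      intro jj _
      apply Finset.sum_congr rfl
      intro k _
      ring
    rw [h1]
    refine (Finset.sum_subset (Finset.subset_univ T) ?_).symm
    intro jj _ hjj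
    have : x jj = 0 := by
      by_contra h
      exact hjj (by simp [hT, h])
    simp [this]
  set S := ∑ jj ∈ T, |x jj| with hS
  -- upper bound for the correlation at t
  have hup : |∑ k, Φ k t * y k| ≤ μ * S := by
    rw [hc t]
    calc |∑ jj ∈ T, (∑ k, Φ k t * Φ k jj) * x jj|
        ≤ ∑ jj ∈ T, |(∑ k, Φ k t * Φ k jj) * x jj| :=
          Finset.abs_sum_le_sum_abs _ _
      _ ≤ ∑ jj ∈ T, μ * |x jj| := by
          refine Finset.sum_le_sum fun jj hjj => ?_
          rw [abs_mul]
          refine mul_le_mul_of_nonneg_right (hμ t jj ?_) (abs_nonneg _)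
          rintro rfl; exact htT hjj
      _ = μ * S := by rw [hS, Finset.mul_sum]
  -- lower bound for the correlation at j
  have hdiag : (∑ k, Φ k j * Φ k j) = 1 := by
    rw [← hunit j]; apply Finset.sum_congr rfl; intro k _; ring
  have hsplit : ∑ jj ∈ T, (∑ k, Φ k j * Φ k jj) * x jj
      = x j + ∑ jj ∈ T.erase j, (∑ k, Φ k j * Φ k jj) * x jj := by
    rw [← Finset.add_sum_erase _ _ hjT, hdiag, one_mul]
  have hrest : |∑ jj ∈ T.erase j, (∑ k, Φ k j * Φ k jj) * x jj| ≤ μ * (S - |x j|) := by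
    calc |∑ jj ∈ T.erase j, (∑ k, Φ k j * Φ k jj) * x jj|
        ≤ ∑ jj ∈ T.erase j, |(∑ k, Φ k j * Φ k jj) * x jj| :=
          Finset.abs_sum_le_sum_abs _ _
      _ ≤ ∑ jj ∈ T.erase j, μ * |x jj| := by
          refine Finset.sum_le_sum fun jj hjj => ?_
          rw [abs_mul]
          refine mul_le_mul_of_nonneg_right (hμ j jj ?_) (abs_nonneg _)
          exact fun h => (Finset.mem_erase.mp hjj).1 h.symm
      _ = μ * (S - |x j|) := by
          rw [← Finset.mul_sum]
          congr 1
          have := Finset.add_sum_erase T (fun jj => |x jj|) hjT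
          rw [hS]; linarith [this]
  have hlow : |x j| - μ * (S - |x j|) ≤ |∑ k, Φ k j * y k| := by
    rw [hc j, hsplit]
    have h1 : |x j| ≤ |x j + ∑ jj ∈ T.erase j, (∑ k, Φ k j * Φ k jj) * x jj|
        + |∑ jj ∈ T.erase j, (∑ k, Φ k j * Φ k jj) * x jj| := by
      have := abs_add_le (x j + ∑ jj ∈ T.erase j, (∑ k, Φ k j * Φ k jj) * x jj)
        (-(∑ jj ∈ T.erase j, (∑ k, Φ k j * Φ k jj) * x jj))
      simpa using this
    linarith [hrest]
  -- S ≤ K * |x j|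
  have hScard : S ≤ (T.card : ℝ) * |x j| := by
    have := Finset.sum_le_card_nsmul T (fun jj => |x jj|) (|x j|)
      (fun jj hjj => hjmax jj hjj)
    simpa [nsmul_eq_mul] using this
  have hSK : S ≤ (K : ℝ) * |x j| := by
    refine le_trans hScard (mul_le_mul_of_nonneg_right ?_ (abs_nonneg _))
    exact_mod_cast hx
  -- combine
  have hK1 : (1 : ℝ) ≤ (K : ℝ) := by exact_mod_cast hK
  have h2K : (0 : ℝ) < 2 * (K : ℝ) - 1 := by linarith
  have hμK' : μ * (2 * (K : ℝ) - 1) < 1 := (lt_div_iff₀ h2K).mp hμK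
  have hchain : |x j| - μ * (S - |x j|) ≤ μ * S := le_trans hlow (le_trans (ht j) hup)
  nlinarith [mul_le_mul_of_nonneg_left hSK hμ0, mul_lt_mul_of_pos_right hμK' hMpos]
end

section
/- Let Φ ∈ ℝ^{m×n} have unit ℓ₂-norm columns and coherence μ < 1/(2K−1). Then the orthogonal matching pursuit algorithm, run for K iterations on y = Φx, exactly recovers every K-sparse vector x; in particular at every iteration OMP selects a new index from the support of x. -/
/-- A run of the orthogonal matching pursuit algorithm on measurements `y` with sensing
matrix `Φ`: `sel k` is the set `T^k` of selected indices, `t (k+1)` the index selected at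
step `k+1` (a maximizer of the correlation with the current residual), `est k` the
least-squares estimate supported on `sel k`, and `r k` the residual. -/
structure OMPRun (m n K : ℕ) (Φ : Matrix (Fin m) (Fin n) ℝ) (y : Fin m → ℝ) where
  t : ℕ → Fin n
  sel : ℕ → Finset (Fin n)
  est : ℕ → (Fin n → ℝ)
  r : ℕ → (Fin m → ℝ)
  sel_zero : sel 0 = ∅
  sel_succ : ∀ k, sel (k + 1) = insert (t (k + 1)) (sel k)
  r_zero : r 0 = y
  t_max : ∀ k < K, ∀ j, |∑ i, r k i * Φ i j| ≤ |∑ i, r k i * Φ i (t (k + 1))|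
  est_supp : ∀ k, ∀ j ∉ sel k, est k j = 0
  est_min : ∀ k, ∀ z : Fin n → ℝ, (∀ j ∉ sel k, z j = 0) →
    ∑ i, (y i - Φ.mulVec (est k) i) ^ 2 ≤ ∑ i, (y i - Φ.mulVec z i) ^ 2
  r_succ : ∀ k, r (k + 1) = fun i => y i - Φ.mulVec (est (k + 1)) i

lemma gram_expand {m n : ℕ} (Φ : Matrix (Fin m) (Fin n) ℝ) (v : Fin n → ℝ) (j : Fin n) :
    ∑ i, Φ.mulVec v i * Φ i j = ∑ l, v l * ∑ i, Φ i l * Φ i j := by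
  simp only [Matrix.mulVec, dotProduct, Finset.sum_mul, Finset.mul_sum]
  rw [Finset.sum_comm]
  exact Finset.sum_congr rfl fun l _ => Finset.sum_congr rfl fun i _ => by ring

lemma corr_upper {n : ℕ} (G : Fin n → Fin n → ℝ) (μ : ℝ)
    (S : Finset (Fin n)) (v : Fin n → ℝ) (hsupp : ∀ l ∉ S, v l = 0)
    (M : ℝ) (hMax : ∀ l ∈ S, |v l| ≤ M)
    (j : Fin n) (hoff : ∀ a ∈ S, |G a j| ≤ μ) :
    |∑ l, v l * G l j| ≤ S.card * μ * M := by
  have hres : ∑ l, v l * G l j = ∑ l ∈ S, v l * G l j := by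
    rw [← Finset.sum_subset (Finset.subset_univ S)]
    intro l _ hl; rw [hsupp l hl, zero_mul]
  rw [hres]
  calc |∑ l ∈ S, v l * G l j| ≤ ∑ l ∈ S, |v l * G l j| := Finset.abs_sum_le_sum_abs _ _
    _ ≤ ∑ l ∈ S, μ * M := by
        refine Finset.sum_le_sum fun l hl => ?_
        rw [abs_mul, mul_comm]
        exact mul_le_mul (hoff l hl) (hMax l hl) (abs_nonneg _)
          ((abs_nonneg _).trans (hoff l hl))
    _ = S.card * μ * M := by rw [Finset.sum_const, nsmul_eq_mul]; ring

lemma corr_lower {n : ℕ} (G : Fin n → Fin n → ℝ) (μ : ℝ) (hμ0 : 0 ≤ μ)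
    (S : Finset (Fin n)) (v : Fin n → ℝ) (hsupp : ∀ l ∉ S, v l = 0)
    (M : ℝ) (j0 : Fin n) (hj0 : j0 ∈ S) (hMeq : |v j0| = M)
    (hMax : ∀ l ∈ S, |v l| ≤ M) (hdiag : G j0 j0 = 1)
    (hoff : ∀ a ∈ S, a ≠ j0 → |G a j0| ≤ μ) :
    M - ((S.card : ℝ) - 1) * μ * M ≤ |∑ l, v l * G l j0| := by
  have hres : ∑ l, v l * G l j0 = ∑ l ∈ S, v l * G l j0 := by
    rw [← Finset.sum_subset (Finset.subset_univ S)]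
    intro l _ hl; rw [hsupp l hl, zero_mul]
  have hsplit : ∑ l ∈ S, v l * G l j0 = v j0 + ∑ l ∈ S.erase j0, v l * G l j0 := by
    rw [← Finset.add_sum_erase S _ hj0, hdiag, mul_one]
  have hrest : |∑ l ∈ S.erase j0, v l * G l j0| ≤ ((S.card : ℝ) - 1) * μ * M := by
    calc |∑ l ∈ S.erase j0, v l * G l j0| ≤ ∑ l ∈ S.erase j0, |v l * G l j0| :=
          Finset.abs_sum_le_sum_abs _ _
      _ ≤ ∑ l ∈ S.erase j0, μ * M := by
          refine Finset.sum_le_sum fun l hl => ?_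
          rw [abs_mul, mul_comm]
          exact mul_le_mul (hoff l (Finset.mem_of_mem_erase hl) (Finset.ne_of_mem_erase hl))
            (hMax l (Finset.mem_of_mem_erase hl)) (abs_nonneg _) hμ0
      _ = ((S.card : ℝ) - 1) * μ * M := by
          rw [Finset.sum_const, nsmul_eq_mul, Finset.card_erase_of_mem hj0]
          have : (1:ℕ) ≤ S.card := Finset.card_pos.mpr ⟨j0, hj0⟩
          push_cast [this]
          ring
  rw [hres, hsplit]
  calc M - ((S.card:ℝ) - 1) * μ * M ≤ |v j0| - |∑ l ∈ S.erase j0, v l * G l j0| := by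
        rw [hMeq]; linarith
    _ ≤ |v j0 + ∑ l ∈ S.erase j0, v l * G l j0| := by
        have h1 := abs_add_le (v j0 + ∑ l ∈ S.erase j0, v l * G l j0)
          (-(∑ l ∈ S.erase j0, v l * G l j0))
        rw [abs_neg] at h1
        simpa using h1

/-- If `Φ` has unit-norm columns and coherence `μ < 1/(2K−1)`, then OMP run for `K`
iterations on `y = Φx` exactly recovers the `K`-sparse vector `x`; in particular at
every iteration it selects a new index from the support of `x`. -/
theorem omp_exact_recovery (m n K : ℕ) (hK : 1 ≤ K)
    (Φ : Matrix (Fin m) (Fin n) ℝ) (μ : ℝ)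
    (hunit : ∀ j, ∑ i, (Φ i j) ^ 2 = 1)
    (hμ : ∀ a b, a ≠ b → |∑ i, Φ i a * Φ i b| ≤ μ)
    (hμK : μ < 1 / (2 * K - 1))
    (x : Fin n → ℝ)
    (hx : (Finset.univ.filter (fun j => x j ≠ 0)).card = K)
    (y : Fin m → ℝ) (hy : y = Φ.mulVec x)
    (run : OMPRun m n K Φ y) :
    (∀ k < K, x (run.t (k + 1)) ≠ 0 ∧ run.t (k + 1) ∉ run.sel k) ∧
      run.est K = x := by
  classical
  set S : Finset (Fin n) := Finset.univ.filter (fun j => x j ≠ 0) with hSdef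
  set ν : ℝ := max μ 0 with hνdef
  have hν0 : (0:ℝ) ≤ ν := le_max_right _ _
  have hK1 : (1:ℝ) ≤ (K:ℝ) := by exact_mod_cast hK
  have hKpos : (0:ℝ) < 2 * K - 1 := by linarith
  have hνK : ν * (2 * K - 1) < 1 := by
    have h1 : ν < 1 / (2 * K - 1) := max_lt hμK (one_div_pos.mpr hKpos)
    rw [lt_div_iff₀ hKpos] at h1
    exact h1
  have hν : ∀ a b : Fin n, a ≠ b → |∑ i, Φ i a * Φ i b| ≤ ν :=
    fun a b h => (hμ a b h).trans (le_max_left _ _)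
  -- residual formula for all k
  have res : ∀ k i, run.r k i = y i - Φ.mulVec (run.est k) i := by
    intro k
    cases k with
    | zero =>
      have h0 : run.est 0 = 0 :=
        funext fun j => run.est_supp 0 j (by rw [run.sel_zero]; exact Finset.notMem_empty j)
      intro i
      rw [run.r_zero, h0, Matrix.mulVec_zero]
      simp
    | succ k => intro i; rw [run.r_succ k]
  -- orthogonality of the residual to selected columns
  have ortho : ∀ k, ∀ j ∈ run.sel k, ∑ i, run.r k i * Φ i j = 0 := by
    intro k j hj
    set c : ℝ := ∑ i, run.r k i * Φ i j with hc
    set z : Fin n → ℝ := fun l => run.est k l + if l = j then c else 0 with hzdef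
    have hzsupp : ∀ l ∉ run.sel k, z l = 0 := by
      intro l hl
      have hne : l ≠ j := fun h => hl (h ▸ hj)
      simp [hzdef, run.est_supp k l hl, hne]
    have hmv : ∀ i, Φ.mulVec z i = Φ.mulVec (run.est k) i + c * Φ i j := by
      intro i
      simp only [hzdef, Matrix.mulVec, dotProduct, mul_add, Finset.sum_add_distrib]
      congr 1
      simp [mul_ite, Finset.sum_ite_eq', mul_comm]
    have hquad : ∑ i, (y i - Φ.mulVec z i)^2
        = ∑ i, (y i - Φ.mulVec (run.est k) i)^2 - 2*c*c + c^2 * 1 := by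
      have hcong : ∀ i ∈ Finset.univ, (y i - Φ.mulVec z i)^2
          = (y i - Φ.mulVec (run.est k) i)^2 - 2*c*(run.r k i * Φ i j) + c^2*(Φ i j)^2 := by
        intro i _
        rw [hmv i, res k i]; ring
      rw [Finset.sum_congr rfl hcong, Finset.sum_add_distrib, Finset.sum_sub_distrib,
        ← Finset.mul_sum, ← Finset.mul_sum, ← hc, hunit j]
    have hmin := run.est_min k z hzsupp
    rw [hquad] at hmin
    nlinarith [sq_nonneg c]
  -- the key selection step
  have step : ∀ k < K, run.sel k ⊆ S → (run.sel k).card = k →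
      run.t (k+1) ∈ S ∧ run.t (k+1) ∉ run.sel k := by
    intro k hk hsub hcard
    set v : Fin n → ℝ := fun l => x l - run.est k l with hv
    have hvsupp : ∀ l ∉ S, v l = 0 := by
      intro l hl
      have hx0 : x l = 0 := by
        by_contra h; exact hl (Finset.mem_filter.mpr ⟨Finset.mem_univ l, h⟩)
      have he0 : run.est k l = 0 := run.est_supp k l (fun h => hl (hsub h))
      simp [hv, hx0, he0]
    have hrv : ∀ i, run.r k i = Φ.mulVec v i := by
      intro i
      have hyi : y i = Φ.mulVec x i := by rw [hy]
      rw [res k i, hyi]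
      simp [hv, Matrix.mulVec, dotProduct, mul_sub, Finset.sum_sub_distrib]
    have hcorr : ∀ j, ∑ i, run.r k i * Φ i j = ∑ l, v l * ∑ i, Φ i l * Φ i j := by
      intro j
      rw [show (∑ i, run.r k i * Φ i j) = ∑ i, Φ.mulVec v i * Φ i j from
        Finset.sum_congr rfl fun i _ => by rw [hrv i]]
      exact gram_expand Φ v j
    have hvne : ∃ l ∈ S, v l ≠ 0 := by
      by_contra h
      push_neg at h
      have hall : ∀ l, v l = 0 := fun l => if hl : l ∈ S then h l hl else hvsupp l hl
      have hSsub : S ⊆ run.sel k := by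
        intro j hjS
        by_contra hjn
        have hxj : x j ≠ 0 := (Finset.mem_filter.mp hjS).2
        have he0 : run.est k j = 0 := run.est_supp k j hjn
        have := hall j
        rw [hv] at this
        simp only [he0, sub_zero] at this
        exact hxj this
      have hcle : S.card ≤ (run.sel k).card := Finset.card_le_card hSsub
      rw [hx, hcard] at hcle
      omega
    have hSne : S.Nonempty := by
      obtain ⟨l, hl, _⟩ := hvne; exact ⟨l, hl⟩
    obtain ⟨j0, hj0S, hj0max⟩ := Finset.exists_max_image S (fun l => |v l|) hSne
    have hMpos : 0 < |v j0| := by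
      obtain ⟨l, hlS, hlne⟩ := hvne
      exact lt_of_lt_of_le (abs_pos.mpr hlne) (hj0max l hlS)
    have hupper : ∀ j ∉ S, |∑ l, v l * ∑ i, Φ i l * Φ i j| ≤ (K:ℝ) * ν * |v j0| := by
      intro j hj
      have h := corr_upper (fun a b => ∑ i, Φ i a * Φ i b) ν S v hvsupp |v j0| hj0max j
        (fun a ha => hν a j (fun hE => hj (hE ▸ ha)))
      rwa [hx] at h
    have hlower : |v j0| - ((K:ℝ) - 1) * ν * |v j0| ≤ |∑ l, v l * ∑ i, Φ i l * Φ i j0| := by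
      have h := corr_lower (fun a b => ∑ i, Φ i a * Φ i b) ν hν0 S v hvsupp |v j0| j0 hj0S rfl
        hj0max (by simpa [pow_two] using hunit j0) (fun a _ hne => hν a j0 hne)
      rwa [hx] at h
    have hstrict : (K:ℝ) * ν * |v j0| < |v j0| - ((K:ℝ) - 1) * ν * |v j0| := by
      have h2 : 0 < 1 - ν * (2 * (K:ℝ) - 1) := by linarith
      nlinarith [mul_pos hMpos h2]
    have hmax0 := run.t_max k hk j0
    rw [hcorr j0] at hmax0
    constructor
    · by_contra hnS
      have h2 := hupper (run.t (k+1)) hnS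
      rw [hcorr (run.t (k+1))] at hmax0
      linarith
    · intro hmem
      have h0 := ortho k (run.t (k+1)) hmem
      rw [h0, abs_zero] at hmax0
      have hνM : 0 ≤ (K:ℝ) * ν * |v j0| := by positivity
      linarith
  -- induction: selected sets stay in the support and grow by one
  have main : ∀ k, k ≤ K → run.sel k ⊆ S ∧ (run.sel k).card = k := by
    intro k
    induction k with
    | zero =>
      intro _
      rw [run.sel_zero]
      exact ⟨Finset.empty_subset _, Finset.card_empty⟩
    | succ k ih =>
      intro hk1
      have hk : k < K := hk1
      obtain ⟨hsub, hcard⟩ := ih (le_of_lt hk)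
      obtain ⟨htS, htn⟩ := step k hk hsub hcard
      rw [run.sel_succ k]
      exact ⟨Finset.insert_subset htS hsub,
        by rw [Finset.card_insert_of_notMem htn, hcard]⟩
  have first : ∀ k < K, x (run.t (k + 1)) ≠ 0 ∧ run.t (k + 1) ∉ run.sel k := by
    intro k hk
    obtain ⟨hsub, hcard⟩ := main k (le_of_lt hk)
    obtain ⟨htS, htn⟩ := step k hk hsub hcard
    exact ⟨(Finset.mem_filter.mp htS).2, htn⟩
  refine ⟨first, ?_⟩
  -- after K steps, sel K = S
  have hselK : run.sel K = S := by
    obtain ⟨hsub, hcard⟩ := main K le_rfl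
    exact Finset.eq_of_subset_of_card_le hsub (le_of_eq (hx.trans hcard.symm))
  -- the least squares estimate fits exactly
  have hy0 : ∀ i, y i = Φ.mulVec (run.est K) i := by
    have hxs : ∀ j ∉ run.sel K, x j = 0 := by
      intro j hj
      rw [hselK] at hj
      by_contra h; exact hj (Finset.mem_filter.mpr ⟨Finset.mem_univ j, h⟩)
    have hmin := run.est_min K x hxs
    have hz : ∑ i, (y i - Φ.mulVec x i)^2 = 0 :=
      Finset.sum_eq_zero fun i _ => by rw [hy, sub_self]; norm_num
    rw [hz] at hmin
    have hall := (Finset.sum_eq_zero_iff_of_nonneg (fun i _ => sq_nonneg _)).mp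
      (le_antisymm hmin (Finset.sum_nonneg fun i _ => sq_nonneg _))
    intro i
    have h1 := hall i (Finset.mem_univ i)
    have h2 := pow_eq_zero_iff (n := 2) (by norm_num) |>.mp h1
    linarith
  set w : Fin n → ℝ := fun l => run.est K l - x l with hw
  have hwsupp : ∀ l ∉ S, w l = 0 := by
    intro l hl
    have hx0 : x l = 0 := by
      by_contra h; exact hl (Finset.mem_filter.mpr ⟨Finset.mem_univ l, h⟩)
    have he0 : run.est K l = 0 := run.est_supp K l (by rw [hselK]; exact hl)
    simp [hw, hx0, he0]
  have hΦw : ∀ i, Φ.mulVec w i = 0 := by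
    intro i
    have hdiff : Φ.mulVec w i = Φ.mulVec (run.est K) i - Φ.mulVec x i := by
      simp [hw, Matrix.mulVec, dotProduct, mul_sub, Finset.sum_sub_distrib]
    have hxy : Φ.mulVec x i = y i := by rw [hy]
    rw [hdiff, hxy, ← hy0 i, sub_self]
  have hwzero : ∀ l, w l = 0 := by
    by_contra h
    push_neg at h
    obtain ⟨l, hl⟩ := h
    have hlS : l ∈ S := by by_contra hns; exact hl (hwsupp l hns)
    obtain ⟨j0, hj0S, hj0max⟩ := Finset.exists_max_image S (fun l => |w l|) ⟨l, hlS⟩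
    have hMpos : 0 < |w j0| := lt_of_lt_of_le (abs_pos.mpr hl) (hj0max l hlS)
    have hlow := corr_lower (fun a b => ∑ i, Φ i a * Φ i b) ν hν0 S w hwsupp |w j0| j0 hj0S rfl
      hj0max (by simpa [pow_two] using hunit j0) (fun a _ hne => hν a j0 hne)
    have hz : ∑ l, w l * ∑ i, Φ i l * Φ i j0 = 0 := by
      rw [← gram_expand]
      exact Finset.sum_eq_zero fun i _ => by rw [hΦw i, zero_mul]
    rw [hz, abs_zero, hx] at hlow
    have h2 : 0 < 1 - ν * ((K:ℝ) - 1) := by nlinarith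
    nlinarith [mul_pos hMpos h2]
  funext l
  have := hwzero l
  rw [hw] at this
  simp only at this
  linarith
end

section
/- Let Φ have unit-norm columns, coherence μ < 1/(2K−1), and suppose after k successful iterations of OMP (with all selected indices in T = supp(x), |T| = K, k < K) the residual r^k is nonzero. Then the next selected index t^{k+1} = argmax_j |⟨r^k, φ_j⟩| lies in T \ T^k. -/
/-- Induction step of the OMP analysis: if the first `k` iterations selected indices
`S = T^k ⊆ T = supp(x)` (with `|T| = K`, `k < K`), `x̂` is the least-squares estimate
supported on `S`, and the residual `r = y − Φ x̂` is nonzero, then any maximizer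
`t` of `|⟨r, φ_j⟩|` lies in `T \ T^k`. -/
theorem omp_induction_step (m n K k : ℕ) (hk : k < K)
    (Φ : Matrix (Fin m) (Fin n) ℝ) (μ : ℝ)
    (hunit : ∀ j, ∑ i, (Φ i j) ^ 2 = 1)
    (hμ : ∀ a b, a ≠ b → |∑ i, Φ i a * Φ i b| ≤ μ)
    (hμK : μ < 1 / (2 * K - 1))
    (x : Fin n → ℝ)
    (hx : (Finset.univ.filter (fun j => x j ≠ 0)).card = K)
    (y : Fin m → ℝ) (hy : y = Φ.mulVec x)
    (S : Finset (Fin n)) (hScard : S.card = k) (hST : ∀ j ∈ S, x j ≠ 0)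
    (xhat : Fin n → ℝ) (hxhat_supp : ∀ j ∉ S, xhat j = 0)
    (hxhat_min : ∀ z : Fin n → ℝ, (∀ j ∉ S, z j = 0) →
      ∑ i, (y i - Φ.mulVec xhat i) ^ 2 ≤ ∑ i, (y i - Φ.mulVec z i) ^ 2)
    (r : Fin m → ℝ) (hr : r = fun i => y i - Φ.mulVec xhat i) (hr0 : r ≠ 0)
    (t : Fin n) (ht : ∀ j, |∑ i, r i * Φ i j| ≤ |∑ i, r i * Φ i t|) :
    x t ≠ 0 ∧ t ∉ S := by
  have hK1 : 1 ≤ K := by omega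
  set T : Finset (Fin n) := Finset.univ.filter (fun j => x j ≠ 0) with hT
  have hTcard : T.card = K := hx
  set v : Fin n → ℝ := fun l => x l - xhat l with hv
  set G : Fin n → Fin n → ℝ := fun a b => ∑ i, Φ i a * Φ i b with hGdef
  set c : Fin n → ℝ := fun j => ∑ i, r i * Φ i j with hcdef
  -- residual as Φ v
  have hres : ∀ i, r i = ∑ l, Φ i l * v l := by
    intro i
    rw [hr, hy]
    simp only [Matrix.mulVec, dotProduct, hv, mul_sub, Finset.sum_sub_distrib]
  -- correlation formula
  have hcv : ∀ j, c j = ∑ l, v l * G l j := by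
    intro j
    simp only [hcdef]
    calc ∑ i, r i * Φ i j = ∑ i, ∑ l, v l * (Φ i l * Φ i j) := by
          refine Finset.sum_congr rfl fun i _ => ?_
          rw [hres i, Finset.sum_mul]
          exact Finset.sum_congr rfl fun l _ => by ring
      _ = ∑ l, ∑ i, v l * (Φ i l * Φ i j) := Finset.sum_comm
      _ = ∑ l, v l * G l j := by
          refine Finset.sum_congr rfl fun l _ => ?_
          rw [hGdef, Finset.mul_sum]
  -- orthogonality of residual to selected columns
  have horth : ∀ j ∈ S, c j = 0 := by
    intro j hj
    have hcj : c j = ∑ i, r i * Φ i j := rfl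
    rw [hcj]
    set e : ℝ := ∑ i, r i * Φ i j with he
    clear_value e
    set z : Fin n → ℝ := fun l => xhat l + if l = j then e else 0 with hz
    have hzsupp : ∀ l ∉ S, z l = 0 := by
      intro l hl
      have hlj : l ≠ j := fun h => hl (h ▸ hj)
      simp [hz, hxhat_supp l hl, hlj]
    have hmz : ∀ i, Φ.mulVec z i = Φ.mulVec xhat i + e * Φ i j := by
      intro i
      simp only [Matrix.mulVec, dotProduct, hz, mul_add, Finset.sum_add_distrib,
        mul_ite, mul_zero, Finset.sum_ite_eq', Finset.mem_univ, if_true]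
      ring
    have hexp : ∑ i, (y i - Φ.mulVec z i) ^ 2
        = (∑ i, (y i - Φ.mulVec xhat i) ^ 2) - e ^ 2 := by
      calc ∑ i, (y i - Φ.mulVec z i) ^ 2
          = ∑ i, ((y i - Φ.mulVec xhat i) ^ 2 - (2 * e) * (r i * Φ i j)
              + e ^ 2 * (Φ i j) ^ 2) := by
            refine Finset.sum_congr rfl fun i _ => ?_
            rw [hmz i, hr]
            ring
        _ = (∑ i, (y i - Φ.mulVec xhat i) ^ 2) - (2 * e) * e
              + e ^ 2 * (∑ i, (Φ i j) ^ 2) := by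
            rw [Finset.sum_add_distrib, Finset.sum_sub_distrib, ← Finset.mul_sum,
              ← Finset.mul_sum, ← he]
        _ = (∑ i, (y i - Φ.mulVec xhat i) ^ 2) - e ^ 2 := by
            rw [hunit j]; ring
    have hmin := hxhat_min z hzsupp
    rw [hexp] at hmin
    have h0 : e ^ 2 = 0 := le_antisymm (by linarith) (sq_nonneg e)
    exact pow_eq_zero_iff (by norm_num) |>.mp h0
  -- support of v
  have hvT : ∀ l, l ∉ T → v l = 0 := by
    intro l hl
    have hxl : x l = 0 := by
      by_contra h
      exact hl (by simp [hT, h])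
    have hlS : l ∉ S := fun hls => hST l hls hxl
    simp [hv, hxl, hxhat_supp l hlS]
  -- v ≠ 0
  have hvne : ∃ l, v l ≠ 0 := by
    by_contra h
    push_neg at h
    apply hr0
    funext i
    rw [hres i]
    simp [h]
  obtain ⟨l₀, hl₀⟩ := hvne
  have hl₀T : l₀ ∈ T := by
    by_contra h
    exact hl₀ (hvT l₀ h)
  obtain ⟨js, hjsT, hjsmax⟩ := T.exists_max_image (fun l => |v l|) ⟨l₀, hl₀T⟩
  set M : ℝ := |v js| with hM
  have hMpos : 0 < M := lt_of_lt_of_le (abs_pos.mpr hl₀) (hjsmax l₀ hl₀T)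
  have hMnn : 0 ≤ M := le_of_lt hMpos
  -- sums restricted to T
  have hcvT : ∀ j, c j = ∑ l ∈ T, v l * G l j := by
    intro j
    rw [hcv j]
    exact (Finset.sum_subset (Finset.subset_univ T)
      (fun l _ hl => by rw [hvT l hl, zero_mul])).symm
  -- bound off support
  have hbound_out : ∀ j, x j = 0 → |c j| ≤ K * μ * M := by
    intro j hjx
    have hjT : j ∉ T := by simp [hT, hjx]
    rw [hcvT j]
    calc |∑ l ∈ T, v l * G l j| ≤ ∑ l ∈ T, |v l * G l j| :=
          Finset.abs_sum_le_sum_abs _ _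
      _ ≤ ∑ l ∈ T, M * μ := by
          refine Finset.sum_le_sum fun l hl => ?_
          rw [abs_mul]
          exact mul_le_mul (hjsmax l hl) (hμ l j (fun h => hjT (h ▸ hl)))
            (abs_nonneg _) hMnn
      _ = K * μ * M := by
          rw [Finset.sum_const, hTcard, nsmul_eq_mul]; ring
  -- lower bound at js
  have hGss : G js js = 1 := by
    rw [hGdef]
    rw [← hunit js]
    exact Finset.sum_congr rfl fun i _ => (sq (Φ i js)).symm ▸ by ring
  have hrest : |∑ l ∈ T.erase js, v l * G l js| ≤ ((K : ℝ) - 1) * μ * M := by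
    calc |∑ l ∈ T.erase js, v l * G l js| ≤ ∑ l ∈ T.erase js, |v l * G l js| :=
          Finset.abs_sum_le_sum_abs _ _
      _ ≤ ∑ l ∈ T.erase js, M * μ := by
          refine Finset.sum_le_sum fun l hl => ?_
          rw [abs_mul]
          exact mul_le_mul (hjsmax l (Finset.mem_of_mem_erase hl))
            (hμ l js (Finset.ne_of_mem_erase hl)) (abs_nonneg _) hMnn
      _ = ((K : ℝ) - 1) * μ * M := by
          rw [Finset.sum_const, Finset.card_erase_of_mem hjsT, hTcard, nsmul_eq_mul]
          rw [Nat.cast_sub hK1]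
          push_cast
          ring
  have habs : ∀ a b : ℝ, |a| - |b| ≤ |a + b| := by
    intro a b
    have h := abs_add_le (a + b) (-b)
    rw [add_neg_cancel_right, abs_neg] at h
    linarith
  have hlow : M * (1 - ((K : ℝ) - 1) * μ) ≤ |c js| := by
    rw [hcvT js, ← Finset.add_sum_erase T _ hjsT, hGss, mul_one]
    have h1 := habs (v js) (∑ l ∈ T.erase js, v l * G l js)
    rw [← hM] at h1
    linarith [hrest]
  -- key numeric inequality
  have h2K : (0 : ℝ) < 2 * K - 1 := by
    have : (1 : ℝ) ≤ K := by exact_mod_cast hK1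
    linarith
  have hμ2K : μ * (2 * K - 1) < 1 := (lt_div_iff₀ h2K).mp hμK
  have hKμ1 : ((K : ℝ) - 1) * μ < 1 := by
    rcases Nat.lt_or_ge K 2 with h | h
    · have hKone : K = 1 := by omega
      subst hKone
      norm_num
    · have hTc : 1 < T.card := by rw [hTcard]; omega
      obtain ⟨a, ha, b, hb, hab⟩ := Finset.one_lt_card.mp hTc
      have hμ0 : 0 ≤ μ := le_trans (abs_nonneg _) (hμ a b hab)
      have hK2 : (2 : ℝ) ≤ K := by exact_mod_cast h
      nlinarith
  have hkey : (K : ℝ) * μ * M < M * (1 - ((K : ℝ) - 1) * μ) := by nlinarith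
  have hct : |c js| ≤ |c t| := ht js
  constructor
  · intro hxt
    have h2 := hbound_out t hxt
    linarith
  · intro hts
    have h3 : c t = 0 := horth t hts
    have h4 : 0 < M * (1 - ((K : ℝ) - 1) * μ) := by
      apply mul_pos hMpos; linarith
    rw [h3, abs_zero] at hct
    linarith
end

section
/- There exists a matrix Φ with 2K unit-norm columns and coherence μ = 1/(2K−1) together with two distinct K-sparse vectors x₁ ≠ x₂ such that Φx₁ = Φx₂; hence no algorithm can recover all K-sparse vectors from y = Φx when μ = 1/(2K−1), showing the condition μ < 1/(2K−1) is sharp. -/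
lemma sum_ite_helper {n : ℕ} (j : Fin n) (A B : ℝ) :
    ∑ i : Fin n, (if i = j then A else B) = (n : ℝ) * B + (A - B) := by
  have h : ∀ i : Fin n, (if i = j then A else B) = B + (if i = j then A - B else 0) := by
    intro i; split <;> ring
  simp_rw [h, Finset.sum_add_distrib, Finset.sum_ite_eq' Finset.univ j,
    Finset.sum_const, Finset.card_univ, Fintype.card_fin]
  simp

lemma card_filter_lt_helper (K : ℕ) :
    (Finset.univ.filter (fun j : Fin (2 * K) => (j : ℕ) < K)).card = K := by
  rw [Finset.card_filter]
  rw [Fin.sum_univ_eq_sum_range (fun j => if j < K then 1 else 0)]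
  rw [← Finset.card_filter]
  have : (Finset.range (2*K)).filter (· < K) = Finset.range K := by
    ext x; simp; omega
  rw [this, Finset.card_range]

/-- Sharpness of the mutual incoherence condition: for every `K ≥ 1` there exists a
matrix `Φ` with `2K` unit-norm columns whose coherence equals `1/(2K−1)` (indeed all
pairwise column inner products have absolute value `1/(2K−1)`), together with two
distinct `K`-sparse vectors `x₁ ≠ x₂` with `Φx₁ = Φx₂`; hence `K`-sparse recovery can
fail when `μ = 1/(2K−1)`. -/
theorem coherence_condition_sharp (K : ℕ) (hK : 1 ≤ K) :
    ∃ (m : ℕ) (Φ : Matrix (Fin m) (Fin (2 * K)) ℝ) (x₁ x₂ : Fin (2 * K) → ℝ),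
      (∀ j, ∑ i, (Φ i j) ^ 2 = 1) ∧
      (∀ a b, a ≠ b → |∑ i, Φ i a * Φ i b| = 1 / (2 * K - 1)) ∧
      (Finset.univ.filter (fun j => x₁ j ≠ 0)).card ≤ K ∧
      (Finset.univ.filter (fun j => x₂ j ≠ 0)).card ≤ K ∧
      x₁ ≠ x₂ ∧
      Φ.mulVec x₁ = Φ.mulVec x₂ := by
  have hK1 : (1:ℝ) ≤ (K:ℝ) := by exact_mod_cast hK
  have hc : (0:ℝ) < 2*K*(2*K-1) := by nlinarith
  set s : ℝ := Real.sqrt (2*K*(2*K-1)) with hs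
  have hspos : 0 < s := Real.sqrt_pos.mpr hc
  have hs2 : s^2 = 2*K*(2*K-1) := Real.sq_sqrt hc.le
  have hsne : s ≠ 0 := hspos.ne'
  set A : ℝ := (1 - 2*K)/s with hA
  set B : ℝ := 1/s with hB
  refine ⟨2*K, fun i j => if i = j then A else B,
    fun j => if (j:ℕ) < K then 1 else 0,
    fun j => if (j:ℕ) < K then 0 else -1, ?_, ?_, ?_, ?_, ?_, ?_⟩
  · -- unit norm columns
    intro j
    have h : ∀ i : Fin (2*K), (if i = j then A else B)^2 = (if i = j then A^2 else B^2) := by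
      intro i; split <;> ring
    simp only [h]
    rw [sum_ite_helper j (A^2) (B^2)]
    rw [hA, hB, div_pow, div_pow]
    rw [Nat.cast_mul]
    field_simp
    push_cast
    nlinarith [hs2]
  · -- coherence
    intro a b hab
    have h : ∀ i : Fin (2*K),
        (if i = a then A else B) * (if i = b then A else B)
        = B*B + (if i = a then (A-B)*B else 0) + (if i = b then B*(A-B) else 0) := by
      intro i
      by_cases ha : i = a <;> by_cases hb : i = b
      · exact absurd (ha.symm.trans hb) hab
      · subst ha; rw [if_pos rfl, if_neg hb, if_pos rfl, if_neg hb]; ring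
      · subst hb; rw [if_neg ha, if_pos rfl, if_neg ha, if_pos rfl]; ring
      · rw [if_neg ha, if_neg hb, if_neg ha, if_neg hb]; ring
    simp only [h]
    rw [Finset.sum_add_distrib, Finset.sum_add_distrib,
      Finset.sum_ite_eq' Finset.univ a, Finset.sum_ite_eq' Finset.univ b,
      Finset.sum_const, Finset.card_univ, Fintype.card_fin]
    simp only [Finset.mem_univ, if_true]
    have hKpos : (0:ℝ) < 2*(K:ℝ) - 1 := by nlinarith
    have hval : (2*K : ℕ) • (B*B) + (A-B)*B + B*(A-B) = -(1/(2*(K:ℝ)-1)) := by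
      rw [nsmul_eq_mul, Nat.cast_mul, hA, hB]
      field_simp
      push_cast
      rw [hs2, show (K:ℝ)*2 - 1 = 2*K - 1 by ring, mul_div_assoc, div_self hKpos.ne']
      ring
    rw [hval, abs_neg, abs_of_nonneg (by positivity)]
  · -- sparsity of x₁
    have hsub : (Finset.univ.filter (fun j : Fin (2*K) =>
        (if (j:ℕ) < K then (1:ℝ) else 0) ≠ 0)) ⊆
        Finset.univ.filter (fun j : Fin (2*K) => (j:ℕ) < K) := by
      intro j hj
      simp only [Finset.mem_filter, Finset.mem_univ, true_and] at hj ⊢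
      by_contra h; simp [h] at hj
    calc _ ≤ _ := Finset.card_le_card hsub
      _ = K := card_filter_lt_helper K
  · -- sparsity of x₂
    have hsub : (Finset.univ.filter (fun j : Fin (2*K) =>
        (if (j:ℕ) < K then (0:ℝ) else -1) ≠ 0)) ⊆
        Finset.univ.filter (fun j : Fin (2*K) => ¬ (j:ℕ) < K) := by
      intro j hj
      simp only [Finset.mem_filter, Finset.mem_univ, true_and] at hj ⊢
      intro hlt
      rw [if_pos hlt] at hj
      exact hj rfl
    have hcard : (Finset.univ.filter (fun j : Fin (2*K) => ¬ (j:ℕ) < K)).card = K := by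
      have := Finset.card_filter_add_card_filter_not
        (s := (Finset.univ : Finset (Fin (2*K)))) (p := fun j => (j:ℕ) < K)
      rw [card_filter_lt_helper K, Finset.card_univ, Fintype.card_fin] at this
      omega
    calc _ ≤ _ := Finset.card_le_card hsub
      _ = K := hcard
  · -- x₁ ≠ x₂
    intro h
    have h0 : (0:ℕ) < 2*K := by omega
    have := congrFun h ⟨0, h0⟩
    have hlt : ((⟨0, h0⟩ : Fin (2*K)) : ℕ) < K := hK
    rw [if_pos hlt, if_pos hlt] at this
    exact one_ne_zero this
  · -- Φ x₁ = Φ x₂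
    funext i
    simp only [Matrix.mulVec, dotProduct]
    rw [← sub_eq_zero, ← Finset.sum_sub_distrib]
    have h : ∀ j : Fin (2*K),
        (if i = j then A else B) * (if (j:ℕ) < K then (1:ℝ) else 0)
        - (if i = j then A else B) * (if (j:ℕ) < K then (0:ℝ) else -1)
        = (if j = i then A else B) := by
      intro j
      by_cases hij : i = j
      · subst hij; rw [if_pos rfl]; split <;> ring
      · have hji : ¬ j = i := fun h => hij h.symm
        rw [if_neg hij, if_neg hji]; split <;> ring
    simp only [h]
    rw [sum_ite_helper i A B, Nat.cast_mul, hA, hB]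
    field_simp
    push_cast
    ring
end
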